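/- Let q ≥ 3 be an integer and let 0 < ρ ≤ 1/2. Define W : ℂ → ℂ by W(s) = (q^{ρ(s−1/2)} − 1)/((s − 1/2) log q) for s ≠ 1/2 and W(1/2) = ρ. Then for every z ∈ ℂ with |z| ≤ 1/log q, one has |W(1/2 + z)| ≥ ρ/2. -/

import Mathlib

open Complex

noncomputable section

/-- **Lower bound for the weight `W`.** For `W(s) = (q^{ρ(s-1/2)} - 1)/((s-1/2) log q)`
(with `W(1/2) = ρ`) and `0 < ρ ≤ 1/2`, one has `|W(1/2+z)| ≥ ρ/2` whenever `|z| ≤ 1/log q`. -/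
theorem weight_lower_bound
    (q : ℕ) (hq : 3 ≤ q) (ρ : ℝ) (hρ0 : 0 < ρ) (hρ2 : ρ ≤ 1 / 2)
    (W : ℂ → ℂ)
    (hW : ∀ s : ℂ, s ≠ 1 / 2 →
      W s = (Complex.exp ((ρ : ℂ) * (s - 1 / 2) * Real.log q) - 1) /
        ((s - 1 / 2) * Real.log q))
    (hWhalf : W (1 / 2) = (ρ : ℂ)) :
    ∀ z : ℂ, ‖z‖ ≤ 1 / Real.log q → ρ / 2 ≤ ‖W (1 / 2 + z)‖ := by
  intro z hz
  have hq1 : (1:ℝ) < q := by exact_mod_cast lt_of_lt_of_le (by norm_num) hq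
  have hlq : 0 < Real.log q := Real.log_pos hq1
  rcases eq_or_ne z 0 with rfl | hz0
  · have : (1:ℂ)/2 + 0 = 1/2 := by ring
    rw [this, hWhalf]
    rw [Complex.norm_real, Real.norm_eq_abs, abs_of_pos hρ0]
    linarith
  · have hne : (1:ℂ)/2 + z ≠ 1/2 := by
      intro h
      apply hz0
      have := sub_eq_zero.mpr h
      linear_combination this
    rw [hW _ hne]
    have h1 : ((1:ℂ)/2 + z - 1/2) = z := by ring
    rw [h1]
    set w : ℂ := (ρ:ℂ) * z * Real.log q with hwdef
    have habsz : 0 < ‖z‖ := by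
      simpa [norm_pos_iff] using hz0
    have hwabs : ‖w‖ = ρ * ‖z‖ * Real.log q := by
      rw [hwdef, norm_mul, norm_mul, Complex.norm_real, Complex.norm_real, Real.norm_eq_abs, Real.norm_eq_abs,
        abs_of_pos hρ0, abs_of_pos hlq]
    have hzl : ‖z‖ * Real.log q ≤ 1 := by
      have := (le_div_iff₀ hlq).mp hz
      linarith
    have hw1 : ‖w‖ ≤ 1 / 2 := by
      rw [hwabs]
      calc ρ * ‖z‖ * Real.log q = ρ * (‖z‖ * Real.log q) := by ring
        _ ≤ ρ * 1 := by nlinarith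
        _ ≤ 1 / 2 := by linarith
    have hkey : ‖w‖ / 2 ≤ ‖Complex.exp w - 1‖ := by
      have h2 := Complex.norm_exp_sub_one_sub_id_le (show ‖w‖ ≤ 1 by linarith)
      have h4 : ‖w‖ ≤ ‖Complex.exp w - 1‖
          + ‖Complex.exp w - 1 - w‖ := by
        have h5 := norm_add_le (Complex.exp w - 1) (w - (Complex.exp w - 1))
        have h6 : (Complex.exp w - 1) + (w - (Complex.exp w - 1)) = w := by ring
        have h7 : ‖w - (Complex.exp w - 1)‖
            = ‖Complex.exp w - 1 - w‖ := norm_sub_rev _ _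
        rw [h6, h7] at h5
        exact h5
      nlinarith [norm_nonneg w, norm_nonneg (Complex.exp w - 1 - w)]
    rw [norm_div, norm_mul, Complex.norm_real, Real.norm_eq_abs, abs_of_pos hlq]
    rw [le_div_iff₀ (by positivity)]
    calc ρ / 2 * (‖z‖ * Real.log q)
        = (ρ * ‖z‖ * Real.log q) / 2 := by ring
      _ = ‖w‖ / 2 := by rw [hwabs]
      _ ≤ ‖Complex.exp w - 1‖ := hkey
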